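/- Let α ∈ (0,1/2) be irrational with approximants p_n/q_n, let 𝒩 = {n ≥ 1 : q_{n+1} > 2 q_n²} with elements n_1 < n_2 < …, and for i ≥ 1 let B_i = B(p_{n_i}/q_{n_i}, 1/q_{n_i}³) and D_i = B(p_{n_i}/q_{n_i}, 1/q_{n_i}²) (disks in ℂ). Then α ∈ B_i for all i ≥ 1, and the closed disk D_{i+1} is contained in B_i \ {p_{n_i}/q_{n_i}} for all i ≥ 1. -/

import Mathlib

open Metric
open GenContFract
local notation "gof" => GenContFract.of


lemma gcf_not_terminatedAt {v : ℝ} (hv : Irrational v) (n : ℕ) :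
    ¬(gof v).TerminatedAt n := fun hc =>
  hv (by rcases (terminates_iff_rat v).mp ⟨n, hc⟩ with ⟨q, hq⟩; exact ⟨q, hq.symm⟩)


lemma gcf_one_le_dens {v : ℝ} (hv : Irrational v) (n : ℕ) :
    (1 : ℝ) ≤ (gof v).dens n := by
  have h := succ_nth_fib_le_of_nth_den (v := v) (n := n)
    (Or.inr (gcf_not_terminatedAt hv _))
  calc (1:ℝ) ≤ (Nat.fib (n+1) : ℝ) := by
        exact_mod_cast Nat.one_le_iff_ne_zero.mpr (Nat.fib_pos.mpr n.succ_pos).ne'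
    _ ≤ _ := h


lemma gcf_dens_mono {v : ℝ} : Monotone fun n => (gof v).dens n :=
  monotone_nat_of_le_succ fun _ => of_den_mono

/-- lower bound: `1/(2 Bₙ Bₙ₊₁) < |v - Aₙ/Bₙ|` for irrational `v`. -/

lemma gcf_lower_bound {v : ℝ} (hv : Irrational v) (n : ℕ) :
    1 / (2 * (gof v).dens n * (gof v).dens (n+1)) < |v - (gof v).convs n| := by
  have hterm : ¬(gof v).TerminatedAt n := gcf_not_terminatedAt hv n
  let g := gof v
  set conts := g.contsAux (n+1) with conts_eq
  set pred_conts := g.contsAux n with pred_conts_eq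
  obtain ⟨gp, s_nth_eq⟩ : ∃ gp, g.s.get? n = some gp := Option.ne_none_iff_exists'.1 hterm
  have gp_a_eq_one : gp.a = 1 := of_partNum_eq_one (partNum_eq_s_a s_nth_eq)
  obtain ⟨ifp_succ_n, succ_nth_stream_eq, ifp_succ_n_b_eq_gp_b⟩ :
      ∃ ifp_succ_n, IntFractPair.stream v (n + 1) = some ifp_succ_n ∧ (ifp_succ_n.b : ℝ) = gp.b :=
    IntFractPair.exists_succ_get?_stream_of_gcf_of_get?_eq_some s_nth_eq
  obtain ⟨ifp_n, stream_nth_eq, stream_nth_fr_ne_zero, if_of_eq_ifp_succ_n⟩ :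
      ∃ ifp_n, IntFractPair.stream v n = some ifp_n ∧ ifp_n.fr ≠ 0
        ∧ IntFractPair.of ifp_n.fr⁻¹ = ifp_succ_n :=
    IntFractPair.succ_nth_stream_eq_some_iff.1 succ_nth_stream_eq
  have heq := sub_convs_eq stream_nth_eq
  simp only [stream_nth_fr_ne_zero, if_false, ← conts_eq, ← pred_conts_eq] at heq
  -- basic facts
  have hB : conts.b = g.dens n := by rw [den_eq_conts_b, nth_cont_eq_succ_nth_contAux]
  have hBpos : (0:ℝ) < conts.b := by rw [hB]; exact lt_of_lt_of_le one_pos (gcf_one_le_dens hv n)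
  have hpB : (0:ℝ) ≤ pred_conts.b := zero_le_of_contsAux_b
  have hfr : 0 < ifp_n.fr :=
    lt_of_le_of_ne (IntFractPair.nth_stream_fr_nonneg stream_nth_eq) (Ne.symm stream_nth_fr_ne_zero)
  have hfrinv : 0 < ifp_n.fr⁻¹ := inv_pos.mpr hfr
  -- recurrence for dens (n+1)
  have nextConts_b_eq : g.dens (n+1) = pred_conts.b + gp.b * conts.b := by
    rw [den_eq_conts_b, nth_cont_eq_succ_nth_contAux,
      contsAux_recurrence s_nth_eq pred_conts_eq conts_eq]
    simp [nextConts, nextDen, gp_a_eq_one, add_comm]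
    rfl
  -- floor bound
  have hfloor : ifp_n.fr⁻¹ < gp.b + 1 := by
    have : ifp_succ_n.b = ⌊ifp_n.fr⁻¹⌋ := by rw [← if_of_eq_ifp_succ_n]; rfl
    calc ifp_n.fr⁻¹ < (⌊ifp_n.fr⁻¹⌋ : ℝ) + 1 := Int.lt_floor_add_one _
      _ = gp.b + 1 := by rw [← this, ifp_succ_n_b_eq_gp_b]
  -- |v - convs n| = 1 / (conts.b * (fr⁻¹ * conts.b + pred_conts.b))
  have hden_pos : 0 < conts.b * (ifp_n.fr⁻¹ * conts.b + pred_conts.b) := by positivity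
  have habs : |v - g.convs n| = 1 / (conts.b * (ifp_n.fr⁻¹ * conts.b + pred_conts.b)) := by
    rw [heq, abs_div, abs_neg_one_pow, abs_of_pos hden_pos]
  rw [habs]
  apply one_div_lt_one_div_of_lt hden_pos
  have hmono : g.dens n ≤ g.dens (n+1) := of_den_mono
  have key : ifp_n.fr⁻¹ * conts.b + pred_conts.b < 2 * g.dens (n+1) := by
    have h1 : ifp_n.fr⁻¹ * conts.b < (gp.b + 1) * conts.b :=
      mul_lt_mul_of_pos_right hfloor hBpos
    have : (gp.b + 1) * conts.b + pred_conts.b = g.dens (n+1) + conts.b := by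
      rw [nextConts_b_eq]; ring
    nlinarith [hB ▸ hmono]
  calc 2 * g.dens n * g.dens (n+1) = 2 * g.dens (n+1) * conts.b := by rw [hB]; ring
    _ > _ := by nlinarith

lemma gcf_two_le_dens {v : ℝ} (h : v ∈ Set.Ioo (0:ℝ) (1/2)) {n : ℕ} (hn : 1 ≤ n) :
    (2:ℝ) ≤ (gof v).dens n := by
  have hfr : Int.fract v = v := Int.fract_eq_self.mpr ⟨h.1.le, by linarith [h.2]⟩
  have hne : Int.fract v ≠ 0 := by rw [hfr]; exact ne_of_gt h.1
  have hs : (gof v).s.get? 0 = some ⟨1, (⌊(Int.fract v)⁻¹⌋ : ℝ)⟩ := of_s_head hne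
  have hd1 : (gof v).dens 1 = (⌊(Int.fract v)⁻¹⌋ : ℝ) := first_den_eq hs
  have h2 : (2:ℤ) ≤ ⌊(Int.fract v)⁻¹⌋ := by
    rw [hfr]
    apply Int.le_floor.mpr
    push_cast
    rw [show (2:ℝ) = (1/2:ℝ)⁻¹ by norm_num]
    exact inv_anti₀ h.1 h.2.le
  have : (2:ℝ) ≤ (gof v).dens 1 := by rw [hd1]; exact_mod_cast h2
  exact this.trans (gcf_dens_mono hn)

set_option maxHeartbeats 1000000 in
/-- Let `α ∈ (0,1/2)` be irrational with approximants `pₙ/qₙ`, let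
`𝒩 = {n ≥ 1 : q_{n+1} > 2 qₙ²}` be enumerated increasingly by `nn`, and for
each `i` let `Bᵢ = B(p_{nᵢ}/q_{nᵢ}, 1/q_{nᵢ}³)` and
`Dᵢ = B(p_{nᵢ}/q_{nᵢ}, 1/q_{nᵢ}²)` be disks in `ℂ`. Then `α ∈ Bᵢ` for all `i`,
and the closed disk `D_{i+1}` is contained in `Bᵢ \ {p_{nᵢ}/q_{nᵢ}}`. -/
theorem good_approximants (α : ℝ) (hα : Irrational α)
    (h : α ∈ Set.Ioo (0 : ℝ) (1/2))
    (q : ℕ → ℝ) (p : ℕ → ℝ)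
    (hq : ∀ n, q n = (GenContFract.of α).dens n)
    (hp : ∀ n, p n = (GenContFract.of α).nums n)
    (nn : ℕ → ℕ) (hmono : StrictMono nn)
    (hmem : ∀ i : ℕ, 1 ≤ nn i ∧ 2 * (q (nn i))^2 < q (nn i + 1))
    (hall : ∀ m : ℕ, 1 ≤ m → 2 * (q m)^2 < q (m + 1) → ∃ i : ℕ, nn i = m) :
    ∀ i : ℕ,
      (α : ℂ) ∈ ball ((p (nn i) / q (nn i) : ℝ) : ℂ) (1 / (q (nn i))^3) ∧
      closedBall ((p (nn (i+1)) / q (nn (i+1)) : ℝ) : ℂ) (1 / (q (nn (i+1)))^2) ⊆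
        ball ((p (nn i) / q (nn i) : ℝ) : ℂ) (1 / (q (nn i))^3) \
          {((p (nn i) / q (nn i) : ℝ) : ℂ)} := by
  have conv_eq : ∀ n, p n / q n = (gof α).convs n := fun n => by
    rw [hp, hq, conv_eq_num_div_den]
  have two_le : ∀ k, 1 ≤ k → (2:ℝ) ≤ q k := fun k hk => by
    rw [hq]; exact gcf_two_le_dens h hk
  have qmono : ∀ a b : ℕ, a ≤ b → q a ≤ q b := fun a b hab => by
    rw [hq, hq]; exact gcf_dens_mono hab
  have upper : ∀ k, |α - p k / q k| ≤ 1 / (q k * q (k+1)) := fun k => by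
    rw [conv_eq, hq, hq]; exact abs_sub_convs_le (gcf_not_terminatedAt hα k)
  have lower : ∀ k, 1 / (2 * q k * q (k+1)) < |α - p k / q k| := fun k => by
    rw [conv_eq, hq, hq]; exact gcf_lower_bound hα k
  intro i
  obtain ⟨hm1, hm2⟩ := hmem i
  obtain ⟨hM1, hM2⟩ := hmem (i+1)
  set m := nn i with hm_def
  set M := nn (i+1) with hM_def
  have hmM : m + 1 ≤ M := hmono (Nat.lt_succ_self i)
  set a := q m with ha_def
  set b := q (m+1) with hb_def
  set c := q M with hc_def
  set d := q (M+1) with hd_def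
  have ha : (2:ℝ) ≤ a := two_le m hm1
  have hc2 : (2:ℝ) ≤ c := two_le M hM1
  have hbc : b ≤ c := qmono (m+1) M hmM
  have hb : (2:ℝ) ≤ b := le_trans (by nlinarith) hm2.le
  have hd : (2:ℝ) ≤ d := le_trans (by nlinarith) hM2.le
  set cm : ℂ := ((p m / q m : ℝ) : ℂ) with hcm_def
  set cM : ℂ := ((p M / q M : ℝ) : ℂ) with hcM_def
  have dαm : dist (α:ℂ) cm ≤ 1/(a*b) := by
    rw [hcm_def, show ((α:ℝ):ℂ) = (((α:ℝ)):ℂ) from rfl, Complex.isometry_ofReal.dist_eq,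
      Real.dist_eq]
    exact upper m
  have dαm' : 1/(2*a*b) < dist (α:ℂ) cm := by
    rw [hcm_def, Complex.isometry_ofReal.dist_eq, Real.dist_eq]
    exact lower m
  have dαM : dist (α:ℂ) cM ≤ 1/(c*d) := by
    rw [hcM_def, Complex.isometry_ofReal.dist_eq, Real.dist_eq]
    exact upper M
  constructor
  · -- α ∈ B i
    rw [mem_ball]
    calc dist (α:ℂ) cm ≤ 1/(a*b) := dαm
      _ < 1/a^3 := by
          apply one_div_lt_one_div_of_lt (by positivity)
          nlinarith
  · intro z hz
    rw [mem_closedBall] at hz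
    have t1 : 1/c^2 < 1/(8*a^3) := by
      apply one_div_lt_one_div_of_lt (by positivity)
      nlinarith
    have hdgt : c < d := by nlinarith
    have f2 : 8*a^3 < c^2 := by nlinarith
    have f3 : 4*(a*b) < c^2 := by
      nlinarith [mul_lt_mul_of_pos_right hm2 (show (0:ℝ) < b by linarith),
        mul_le_mul hbc hbc (by linarith) (by linarith : (0:ℝ) ≤ c)]
    have f1 : c^2 < c*d := by nlinarith
    have t2 : 1/(c*d) < 1/(8*a^3) := by
      apply one_div_lt_one_div_of_lt (by positivity)
      linarith
    have t3 : 1/(a*b) < 1/(2*a^3) := by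
      apply one_div_lt_one_div_of_lt (by positivity)
      have := mul_lt_mul_of_pos_left hm2 (show (0:ℝ) < a by linarith)
      linarith
    have s1 : 1/c^2 < 1/(4*(a*b)) := by
      apply one_div_lt_one_div_of_lt (by positivity)
      linarith
    have s2 : 1/(c*d) < 1/(4*(a*b)) := by
      apply one_div_lt_one_div_of_lt (by positivity)
      linarith
    have tri1 : dist z cm ≤ dist z cM + dist cM (α:ℂ) + dist (α:ℂ) cm := dist_triangle4 _ _ _ _
    have tri2 : dist (α:ℂ) cm ≤ dist (α:ℂ) cM + dist cM z + dist z cm := dist_triangle4 _ _ _ _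
    have hdistsym : dist cM (α:ℂ) = dist (α:ℂ) cM := dist_comm _ _
    have hdistsym2 : dist cM z = dist z cM := dist_comm _ _
    constructor
    · rw [mem_ball]
      have ha3 : (0:ℝ) < a^3 := by positivity
      calc dist z cm ≤ dist z cM + dist cM (α:ℂ) + dist (α:ℂ) cm := tri1
        _ ≤ 1/c^2 + 1/(c*d) + 1/(a*b) := by rw [hdistsym]; gcongr
        _ < 1/(8*a^3) + 1/(8*a^3) + 1/(2*a^3) := by gcongr
        _ < 1/a^3 := by
            have heq : 1/(8*a^3) + 1/(8*a^3) + 1/(2*a^3) = (3/4)*(1/a^3) := by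
              ring
            have hp3 : (0:ℝ) < 1/a^3 := by positivity
            rw [heq]; linarith
    · rw [Set.mem_singleton_iff]
      have hpos : 0 < dist z cm := by
        have : dist (α:ℂ) cM + dist cM z ≤ 1/(c*d) + 1/c^2 := by rw [hdistsym2]; gcongr
        have habpos : (0:ℝ) < 1/(2*a*b) := by positivity
        have key : 1/(c*d) + 1/c^2 < 1/(2*a*b) := by
          have : 1/(4*(a*b)) + 1/(4*(a*b)) = 1/(2*(a*b)) := by ring
          calc 1/(c*d) + 1/c^2 < 1/(4*(a*b)) + 1/(4*(a*b)) := by linarith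
            _ = 1/(2*a*b) := by ring_nf
        linarith
      exact fun hzeq => absurd (hzeq ▸ hpos) (by simp)
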